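/- For all natural numbers k, m, n, C(2n, n) · F(k·n + 2m) = Σ_{i=0}^{n} C(n, i)²·F(k·i + m)·L(k·(n−i) + m), where C(n, i) denotes the binomial coefficient. -/

import Mathlib

noncomputable def genFib (a b : ℝ) : ℕ → ℝ
  | 0 => 0
  | 1 => 1
  | n + 2 => a * genFib a b (n + 1) + b * genFib a b n

noncomputable def genLuc (a b : ℝ) : ℕ → ℝ
  | 0 => 2
  | 1 => a
  | n + 2 => a * genLuc a b (n + 1) + b * genLuc a b n

lemma genFib_add_two (a b : ℝ) (n : ℕ) :
    genFib a b (n + 2) = a * genFib a b (n + 1) + b * genFib a b n := by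
  simp [genFib]

lemma genLuc_add_two (a b : ℝ) (n : ℕ) :
    genLuc a b (n + 2) = a * genLuc a b (n + 1) + b * genLuc a b n := by
  simp [genLuc]

lemma genLuc_eq (a b : ℝ) (p : ℕ) :
    genLuc a b p = 2 * genFib a b (p + 1) - a * genFib a b p := by
  induction p using Nat.twoStepInduction with
  | zero => simp [genFib, genLuc]
  | one => simp [genFib, genLuc]; ring
  | more p ih1 ih2 =>
    have h1 : genFib a b (p + 1 + 1) = a * genFib a b (p + 1) + b * genFib a b p :=
      genFib_add_two a b p
    have h2 : genFib a b (p + 1 + 2) = a * genFib a b (p + 1 + 1) + b * genFib a b (p + 1) :=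
      genFib_add_two a b (p + 1)
    rw [genLuc_add_two, ih1, ih2, show p + 2 + 1 = p + 1 + 2 from rfl,
      show p + 2 = p + 1 + 1 from rfl]
    linear_combination (-2) * h2 + a * h1

lemma genFib_addition (a b : ℝ) (q p : ℕ) :
    2 * genFib a b (p + q) = genFib a b p * genLuc a b q + genFib a b q * genLuc a b p := by
  induction q using Nat.twoStepInduction with
  | zero => simp [genFib, genLuc]; ring
  | one =>
    have h1 : genFib a b 1 = 1 := by simp [genFib]
    have h2 : genLuc a b 1 = a := by simp [genLuc]
    rw [h1, h2, genLuc_eq a b p]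
    ring
  | more q ih1 ih2 =>
    have h : p + (q + 2) = (p + q) + 2 := by omega
    rw [h, genFib_add_two, genFib_add_two a b q, genLuc_add_two,
      show p + q + 1 = p + (q + 1) from rfl]
    linear_combination a * ih2 + b * ih1

lemma sum_choose_sq (n : ℕ) :
    ∑ i ∈ Finset.range (n + 1), (n.choose i) * (n.choose (n - i)) = (2 * n).choose n := by
  rw [two_mul, Nat.add_choose_eq, Finset.Nat.sum_antidiagonal_eq_sum_range_succ_mk]

theorem genFib_central_binomial_identity (a b : ℝ) (k m n : ℕ) :
    ((2 * n).choose n : ℝ) * genFib a b (k * n + 2 * m) =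
      ∑ i ∈ Finset.range (n + 1),
        (n.choose i : ℝ) ^ 2 * genFib a b (k * i + m) * genLuc a b (k * (n - i) + m) := by
  set S := ∑ i ∈ Finset.range (n + 1),
      (n.choose i : ℝ) ^ 2 * genFib a b (k * i + m) * genLuc a b (k * (n - i) + m) with hS
  have hrefl : S = ∑ i ∈ Finset.range (n + 1),
      (n.choose i : ℝ) ^ 2 * genFib a b (k * (n - i) + m) * genLuc a b (k * i + m) := by
    rw [hS, ← Finset.sum_range_reflect]
    apply Finset.sum_congr rfl
    intro i hi
    have hi' : i ≤ n := by simpa using Nat.lt_succ_iff.mp (Finset.mem_range.mp hi)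
    have h1 : n + 1 - 1 - i = n - i := by omega
    have h2 : n - (n - i) = i := by omega
    rw [h1, h2, Nat.choose_symm hi']
  have h2S : 2 * S = 2 * ((2 * n).choose n : ℝ) * genFib a b (k * n + 2 * m) := by
    have : 2 * S = S + S := by ring
    rw [this]
    nth_rewrite 2 [hrefl]
    rw [hS, ← Finset.sum_add_distrib]
    have hsum : ∀ i ∈ Finset.range (n + 1),
        (n.choose i : ℝ) ^ 2 * genFib a b (k * i + m) * genLuc a b (k * (n - i) + m) +
          (n.choose i : ℝ) ^ 2 * genFib a b (k * (n - i) + m) * genLuc a b (k * i + m) =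
        (n.choose i : ℝ) * (n.choose (n - i) : ℝ) * (2 * genFib a b (k * n + 2 * m)) := by
      intro i hi
      have hi' : i ≤ n := Nat.lt_succ_iff.mp (Finset.mem_range.mp hi)
      have hk : k * i + k * (n - i) = k * n := by
        rw [← Nat.mul_add, Nat.add_sub_cancel' hi']
      have hidx : (k * i + m) + (k * (n - i) + m) = k * n + 2 * m := by omega
      have hadd := genFib_addition a b (k * (n - i) + m) (k * i + m)
      rw [hidx] at hadd
      rw [Nat.choose_symm hi']
      nlinarith [hadd]
    rw [Finset.sum_congr rfl hsum]
    rw [← Finset.sum_mul]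
    have : ∑ i ∈ Finset.range (n + 1), (n.choose i : ℝ) * (n.choose (n - i) : ℝ) =
        ((2 * n).choose n : ℝ) := by
      push_cast [← sum_choose_sq n]
      rfl
    rw [this]
    ring
  linarith
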